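/- Let X be a completely regular topological space and let α be a topology on C(X,$) such that every α-open set is a compact family and, for every x ∈ X, the family 𝒪(x) := {U ∈ C(X,$) : x ∈ U} is α-open. Then the following three cardinals coincide: (i) the α-Lindelöf number αL(X), the least infinite cardinal λ such that every α-cover of X has an α-subcover of cardinality at most λ; (ii) the tightness of the topological space (C(X,$), α) at the point X; (iii) the tightness at the zero function of C(X,ℝ) endowed with the topology α(X,ℝ) generated by the subbase {[𝒜,V] : 𝒜 ∈ α-open, V open in ℝ}, where [𝒜,V] := {f ∈ C(X,ℝ) : f⁻¹(V) ∈ 𝒜}. -/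

import Mathlib

open TopologicalSpace Topology Cardinal

universe u

/-- A family of open sets is *openly isotone* if it is upward closed among open sets. -/
def OpenlyIsotone {X : Type*} [TopologicalSpace X] (A : Set (Opens X)) : Prop :=
  ∀ ⦃U V : Opens X⦄, U ∈ A → U ≤ V → V ∈ A

/-- A family of open sets is a *compact family* if it is openly isotone and whenever the
union of a collection of open sets belongs to it, the union of some finite subcollection
already belongs to it. -/
def CompactFamily {X : Type*} [TopologicalSpace X] (A : Set (Opens X)) : Prop :=
  OpenlyIsotone A ∧
    ∀ B : Set (Opens X), sSup B ∈ A → ∃ S ⊆ B, S.Finite ∧ sSup S ∈ A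

/-- The preimage of an open set under a continuous map, as an open set. -/
def preim {X Z : Type*} [TopologicalSpace X] [TopologicalSpace Z]
    (f : C(X, Z)) (U : Opens Z) : Opens X :=
  ⟨f ⁻¹' U, U.isOpen.preimage f.continuous⟩

/-- `Pfam` is an `α`-cover if it meets every nonempty `α`-open family. -/
def IsAlphaCover {X : Type*} [TopologicalSpace X] (α : TopologicalSpace (Opens X))
    (Pfam : Set (Opens X)) : Prop :=
  ∀ A : Set (Opens X), IsOpen[α] A → A.Nonempty → (Pfam ∩ A).Nonempty

/-- The `α`-Lindelöf number of `X`: the least infinite cardinal `λ` such that every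
`α`-cover of `X` has an `α`-subcover of cardinality at most `λ`. -/
noncomputable def alphaLindelof {X : Type u} [TopologicalSpace X]
    (α : TopologicalSpace (Opens X)) : Cardinal.{u} :=
  sInf {l : Cardinal.{u} | ℵ₀ ≤ l ∧
    ∀ Pfam : Set (Opens X), IsAlphaCover α Pfam →
      ∃ S ⊆ Pfam, Cardinal.mk S ≤ l ∧ IsAlphaCover α S}

/-- The tightness of a topological space at a point. -/
noncomputable def tightnessAt {Y : Type u} (t : TopologicalSpace Y) (y : Y) :
    Cardinal.{u} :=
  sInf {κ : Cardinal.{u} | ℵ₀ ≤ κ ∧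
    ∀ S : Set Y, y ∈ @closure _ t S →
      ∃ T ⊆ S, Cardinal.mk T ≤ κ ∧ y ∈ @closure _ t T}

/-! ### Auxiliary material -/

/-- The subbase for the topology `α(X,ℝ)` on `C(X,ℝ)`. -/
def subB {X : Type u} [TopologicalSpace X] (α : TopologicalSpace (Opens X)) :
    Set (Set C(X, ℝ)) :=
  {S : Set C(X, ℝ) |
    ∃ A : Set (Opens X), IsOpen[α] A ∧
      ∃ V : Opens ℝ, S = {f : C(X, ℝ) | preim f V ∈ A}}

/-- The basic open intervals around `0` in `ℝ`. -/
def Iball (n : ℕ) : Opens ℝ :=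
  ⟨Set.Ioo (-(1 / (n + 1))) (1 / (n + 1)), isOpen_Ioo⟩

lemma zero_mem_Iball (n : ℕ) : (0 : ℝ) ∈ Iball n := by
  have h : (0:ℝ) < 1 / (n + 1) := by positivity
  exact ⟨by linarith, h⟩

lemma Iball_anti {n m : ℕ} (h : n ≤ m) : (Iball m : Set ℝ) ⊆ (Iball n : Set ℝ) := by
  intro x hx
  obtain ⟨h1, h2⟩ := hx
  have hle : (1 : ℝ) / (m + 1) ≤ 1 / (n + 1) := by
    apply one_div_le_one_div_of_le (by positivity)
    have : (n : ℝ) ≤ m := Nat.cast_le.mpr h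
    linarith
  exact ⟨by linarith, by linarith⟩

lemma exists_Iball_subset (V : Opens ℝ) (h0 : (0 : ℝ) ∈ V) :
    ∃ n : ℕ, (Iball n : Set ℝ) ⊆ (V : Set ℝ) := by
  obtain ⟨ε, hε, hball⟩ := Metric.isOpen_iff.mp V.isOpen 0 h0
  obtain ⟨n, hn⟩ := exists_nat_one_div_lt (K := ℝ) hε
  refine ⟨n, fun x hx => hball ?_⟩
  rw [Real.ball_eq_Ioo]
  obtain ⟨h1, h2⟩ := hx
  exact ⟨by linarith, by linarith⟩

lemma preim_zero_of_mem {X : Type u} [TopologicalSpace X] {V : Opens ℝ}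
    (h : (0 : ℝ) ∈ V) : preim (0 : C(X, ℝ)) V = ⊤ := by
  ext x; simp [preim, h]

lemma preim_zero_of_not_mem {X : Type u} [TopologicalSpace X] {V : Opens ℝ}
    (h : (0 : ℝ) ∉ V) : preim (0 : C(X, ℝ)) V = ⊥ := by
  ext x; simp [preim, h]

section Aux

variable {X : Type u} [TopologicalSpace X]

/-- closure membership in a generated topology via finite intersections of subbasic sets -/
lemma mem_closure_generateFrom {Y : Type*} (g : Set (Set Y)) (y : Y) (S : Set Y) :
    y ∈ @closure _ (generateFrom g) S ↔
      ∀ F : Set (Set Y), F.Finite → F ⊆ g → (∀ t ∈ F, y ∈ t) → (S ∩ ⋂₀ F).Nonempty := by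
  letI := generateFrom g
  have hb := isTopologicalBasis_of_subbasis (s := g) rfl
  rw [hb.mem_closure_iff]
  constructor
  · intro h F hFfin hFg hy
    obtain ⟨z, hz1, hz2⟩ := h (⋂₀ F) ⟨F, ⟨hFfin, hFg⟩, rfl⟩ (Set.mem_sInter.2 hy)
    exact ⟨z, hz2, hz1⟩
  · rintro h o ⟨F, ⟨hFfin, hFg⟩, rfl⟩ hyo
    obtain ⟨z, hz1, hz2⟩ := h F hFfin hFg (Set.mem_sInter.1 hyo)
    exact ⟨z, hz2, hz1⟩

variable (α : TopologicalSpace (Opens X))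

lemma top_mem_of_nonempty (hcpt : ∀ S : Set (Opens X), IsOpen[α] S → CompactFamily S)
    {A : Set (Opens X)} (hA : IsOpen[α] A) (hne : A.Nonempty) : ⊤ ∈ A := by
  obtain ⟨U, hU⟩ := hne
  exact (hcpt A hA).1 hU le_top

lemma cover_iff_closure (hcpt : ∀ S : Set (Opens X), IsOpen[α] S → CompactFamily S)
    (P : Set (Opens X)) :
    IsAlphaCover α P ↔ (⊤ : Opens X) ∈ @closure _ α P := by
  letI := α
  rw [mem_closure_iff]
  constructor
  · intro h o ho hto
    obtain ⟨U, h1, h2⟩ := h o ho ⟨⊤, hto⟩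
    exact ⟨U, h2, h1⟩
  · intro h A hA hne
    obtain ⟨U, h1, h2⟩ := h A hA (top_mem_of_nonempty α hcpt hA hne)
    exact ⟨U, h2, h1⟩

lemma helper1 (hcpt : ∀ S : Set (Opens X), IsOpen[α] S → CompactFamily S)
    {s : Set C(X, ℝ)} (hs : s ∈ subB α) (h0 : (0 : C(X, ℝ)) ∈ s) :
    ∃ (A : Set (Opens X)) (N : ℕ), IsOpen[α] A ∧ ⊤ ∈ A ∧
      ∀ (f : C(X, ℝ)) (n : ℕ), N ≤ n → preim f (Iball n) ∈ A → f ∈ s := by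
  obtain ⟨A, hA, V, rfl⟩ := hs
  have hiso := (hcpt A hA).1
  by_cases h0V : (0 : ℝ) ∈ V
  · obtain ⟨N, hN⟩ := exists_Iball_subset V h0V
    refine ⟨A, N, hA, ?_, ?_⟩
    · have h0' : preim (0 : C(X, ℝ)) V ∈ A := h0
      rw [preim_zero_of_mem (X := X) h0V] at h0'; exact h0'
    · intro f n hn hf
      refine hiso hf ?_
      intro x hx
      exact hN (Iball_anti hn hx)
  · have h0' : preim (0 : C(X, ℝ)) V ∈ A := h0
    rw [preim_zero_of_not_mem (X := X) h0V] at h0'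
    exact ⟨A, 0, hA, hiso h0' le_top, fun f n _ _ => hiso h0' bot_le⟩

lemma helperF (hcpt : ∀ S : Set (Opens X), IsOpen[α] S → CompactFamily S)
    {F : Set (Set C(X, ℝ))} (hfin : F.Finite) (hsub : F ⊆ subB α)
    (h0 : ∀ s ∈ F, (0 : C(X, ℝ)) ∈ s) :
    ∃ (A : Set (Opens X)) (N : ℕ), IsOpen[α] A ∧ ⊤ ∈ A ∧
      ∀ (f : C(X, ℝ)) (n : ℕ), N ≤ n → preim f (Iball n) ∈ A → f ∈ ⋂₀ F := by
  refine Set.Finite.induction_on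
    (motive := fun F _ => F ⊆ subB α → (∀ s ∈ F, (0 : C(X, ℝ)) ∈ s) →
      ∃ (A : Set (Opens X)) (N : ℕ), IsOpen[α] A ∧ ⊤ ∈ A ∧
        ∀ (f : C(X, ℝ)) (n : ℕ), N ≤ n → preim f (Iball n) ∈ A → f ∈ ⋂₀ F)
    F hfin ?_ ?_ hsub h0
  · intro _ _
    exact ⟨Set.univ, 0, @isOpen_univ _ α, trivial, fun f n _ _ => by simp⟩
  · intro a s _ _ ih hsub' h0'
    obtain ⟨A1, N1, h11, h12, h13⟩ := helper1 α hcpt (hsub' (Set.mem_insert _ _))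
      (h0' _ (Set.mem_insert _ _))
    obtain ⟨A2, N2, h21, h22, h23⟩ := ih
      (fun t ht => hsub' (Set.mem_insert_of_mem _ ht))
      (fun t ht => h0' t (Set.mem_insert_of_mem _ ht))
    refine ⟨A1 ∩ A2, max N1 N2, @IsOpen.inter _ α _ _ h11 h21, ⟨h12, h22⟩, ?_⟩
    intro f n hn hf
    rw [Set.sInter_insert]
    exact ⟨h13 f n (le_trans (le_max_left _ _) hn) hf.1,
      h23 f n (le_trans (le_max_right _ _) hn) hf.2⟩

/-- Separation: given `U` in a compact `α`-open family `A`, there is a continuous function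
vanishing on some member of `A` and equal to `1` outside `U`. -/
lemma exists_fun [CompletelyRegularSpace X]
    (hcpt : ∀ S : Set (Opens X), IsOpen[α] S → CompactFamily S)
    {A : Set (Opens X)} (hA : IsOpen[α] A) {U : Opens X} (hU : U ∈ A) :
    ∃ (f : C(X, ℝ)) (W : Opens X), W ∈ A ∧ (∀ x ∈ (W : Set X), f x = 0) ∧
      ∀ x ∉ (U : Set X), f x = 1 := by
  classical
  set B : Set (Opens X) := {W : Opens X | ∃ g : C(X, ℝ),
    (∀ x ∈ (W : Set X), g x = 0) ∧ ∀ x ∉ (U : Set X), g x = 1} with hB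
  have hsup : sSup B = U := by
    apply le_antisymm
    · refine sSup_le fun W hW => ?_
      obtain ⟨g, hg0, hg1⟩ := hW
      intro x hx
      by_contra hxU
      have := hg0 x hx
      have := hg1 x hxU
      linarith
    · intro x hx
      obtain ⟨f, cf, hfx, hfK⟩ := CompletelyRegularSpace.completely_regular x
        ((U : Set X)ᶜ) U.isOpen.isClosed_compl (by simpa using hx)
      set g : C(X, ℝ) := ⟨fun y => ((f y : ℝ)), continuous_subtype_val.comp cf⟩ with hgdef
      set h : C(X, ℝ) := ⟨fun y => max 0 (2 * g y - 1),
        continuous_const.max (((continuous_const.mul g.continuous).sub continuous_const))⟩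
        with hhdef
      set W : Opens X := ⟨g ⁻¹' Set.Iio (1/2), (isOpen_Iio).preimage g.continuous⟩ with hWdef
      have hW : W ∈ B := by
        refine ⟨h, ?_, ?_⟩
        · intro y hy
          have hy' : g y < 1/2 := hy
          simp only [hhdef, ContinuousMap.coe_mk]
          exact max_eq_left (by linarith)
        · intro y hy
          have : f y = 1 := hfK hy
          have hgy : g y = 1 := by simp [hgdef, this]
          simp only [hhdef, ContinuousMap.coe_mk, hgy]
          norm_num
      have hxW : x ∈ W := by
        have : g x = 0 := by simp [hgdef, hfx]
        show g x ∈ Set.Iio (1/2 : ℝ)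
        rw [this]; norm_num
      exact Opens.mem_sSup.2 ⟨W, hW, hxW⟩
  obtain ⟨B', hB'sub, hB'fin, hB'mem⟩ := (hcpt A hA).2 B (by rw [hsup]; exact hU)
  have hgex : ∀ W ∈ B', ∃ g : C(X, ℝ),
      (∀ x ∈ (W : Set X), g x = 0) ∧ ∀ x ∉ (U : Set X), g x = 1 :=
    fun W hW => hB'sub hW
  choose g hg0 hg1 using hgex
  set f : C(X, ℝ) := ∏ W ∈ hB'fin.toFinset.attach,
    g W.1 (hB'fin.mem_toFinset.1 W.2) with hfdef
  refine ⟨f, sSup B', hB'mem, ?_, ?_⟩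
  · intro x hx
    obtain ⟨W, hW, hxW⟩ := Opens.mem_sSup.1 hx
    rw [hfdef, ContinuousMap.prod_apply]
    exact Finset.prod_eq_zero (Finset.mem_attach _ ⟨W, hB'fin.mem_toFinset.2 hW⟩)
      (hg0 W (hB'fin.mem_toFinset.1 (hB'fin.mem_toFinset.2 hW)) x hxW)
  · intro x hx
    rw [hfdef, ContinuousMap.prod_apply]
    exact Finset.prod_eq_one fun W _ => hg1 _ _ x hx

end Aux

section Main

variable {X : Type u} [TopologicalSpace X] (α : TopologicalSpace (Opens X))

lemma dir23 (hcpt : ∀ S : Set (Opens X), IsOpen[α] S → CompactFamily S)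
    {l : Cardinal.{u}} (hl : ℵ₀ ≤ l)
    (h : ∀ P : Set (Opens X), (⊤ : Opens X) ∈ @closure _ α P →
      ∃ Q ⊆ P, Cardinal.mk Q ≤ l ∧ (⊤ : Opens X) ∈ @closure _ α Q) :
    ∀ S : Set C(X, ℝ), (0 : C(X, ℝ)) ∈ @closure _ (generateFrom (subB α)) S →
      ∃ T ⊆ S, Cardinal.mk T ≤ l ∧
        (0 : C(X, ℝ)) ∈ @closure _ (generateFrom (subB α)) T := by
  intro S hS
  rw [mem_closure_generateFrom] at hS
  obtain ⟨f₀, hf₀S, -⟩ := hS ∅ Set.finite_empty (Set.empty_subset _) (by simp)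
  -- the image families are α-covers
  have hcov : ∀ n : ℕ, IsAlphaCover α ((fun f : C(X, ℝ) => preim f (Iball n)) '' S) := by
    intro n A hA hne
    have htop : ⊤ ∈ A := top_mem_of_nonempty α hcpt hA hne
    have hsb : {f : C(X, ℝ) | preim f (Iball n) ∈ A} ∈ subB α := ⟨A, hA, Iball n, rfl⟩
    have h0m : (0 : C(X, ℝ)) ∈ {f : C(X, ℝ) | preim f (Iball n) ∈ A} := by
      show preim (0 : C(X, ℝ)) (Iball n) ∈ A
      rw [preim_zero_of_mem (X := X) (zero_mem_Iball n)]; exact htop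
    obtain ⟨f, hf1, hf2⟩ := hS {{f : C(X, ℝ) | preim f (Iball n) ∈ A}}
      (Set.finite_singleton _) (by simpa using hsb) (by simpa using h0m)
    have hf3 : preim f (Iball n) ∈ A := by
      have := hf2; rw [Set.sInter_singleton] at this; exact this
    exact ⟨preim f (Iball n), ⟨f, hf1, rfl⟩, hf3⟩
  -- select subcovers of size ≤ l
  have hsel : ∀ n : ℕ, ∃ Q ⊆ (fun f : C(X, ℝ) => preim f (Iball n)) '' S,
      Cardinal.mk Q ≤ l ∧ IsAlphaCover α Q := by
    intro n
    obtain ⟨Q, hQ1, hQ2, hQ3⟩ := h _ ((cover_iff_closure α hcpt _).mp (hcov n))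
    exact ⟨Q, hQ1, hQ2, (cover_iff_closure α hcpt _).mpr hQ3⟩
  choose Q hQsub hQcard hQcov using hsel
  have hrep : ∀ (n : ℕ) (U : Opens X), U ∈ Q n → ∃ f, f ∈ S ∧ preim f (Iball n) = U := by
    intro n U hU
    obtain ⟨f, hf1, hf2⟩ := hQsub n hU
    exact ⟨f, hf1, hf2⟩
  choose c hc1 hc2 using hrep
  set T : Set C(X, ℝ) :=
    insert f₀ (⋃ p : ULift.{u} ℕ, Set.range (fun q : Q p.down => c p.down q.1 q.2)) with hT
  have hTS : T ⊆ S := by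
    rintro f (rfl | hf)
    · exact hf₀S
    · obtain ⟨p, hp⟩ := Set.mem_iUnion.1 hf
      obtain ⟨q, rfl⟩ := hp
      exact hc1 _ _ _
  have hTcard : Cardinal.mk T ≤ l := by
    refine le_trans Cardinal.mk_insert_le ?_
    have h1 : Cardinal.mk (⋃ p : ULift.{u} ℕ, Set.range (fun q : Q p.down => c p.down q.1 q.2))
        ≤ Cardinal.mk (ULift.{u} ℕ) * ⨆ p : ULift.{u} ℕ,
          Cardinal.mk (Set.range (fun q : Q p.down => c p.down q.1 q.2)) :=
      Cardinal.mk_iUnion_le _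
    have h2 : (⨆ p : ULift.{u} ℕ,
        Cardinal.mk (Set.range (fun q : Q p.down => c p.down q.1 q.2))) ≤ l :=
      ciSup_le' fun p => le_trans Cardinal.mk_range_le (hQcard p.down)
    have h3 : Cardinal.mk (ULift.{u} ℕ) = ℵ₀ := Cardinal.mk_eq_aleph0 _
    have h4 : Cardinal.mk (⋃ p : ULift.{u} ℕ,
        Set.range (fun q : Q p.down => c p.down q.1 q.2)) ≤ ℵ₀ * l := by
      refine le_trans h1 ?_
      rw [h3]
      exact mul_le_mul' le_rfl h2
    have h5 : ℵ₀ * l = l := by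
      rw [Cardinal.mul_eq_max le_rfl hl]; exact max_eq_right hl
    have h6 : Cardinal.mk (⋃ p : ULift.{u} ℕ,
        Set.range (fun q : Q p.down => c p.down q.1 q.2)) ≤ l := h4.trans (le_of_eq h5)
    calc Cardinal.mk (⋃ p : ULift.{u} ℕ,
          Set.range (fun q : Q p.down => c p.down q.1 q.2)) + 1
        ≤ l + 1 := add_le_add_left h6 1
      _ = l := Cardinal.add_one_eq hl
  refine ⟨T, hTS, hTcard, ?_⟩
  rw [mem_closure_generateFrom]
  intro F hFfin hFsub hF0
  obtain ⟨A, N, hAopen, hAtop, hAprop⟩ := helperF α hcpt hFfin hFsub hF0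
  obtain ⟨U, hUQ, hUA⟩ := hQcov N A hAopen ⟨⊤, hAtop⟩
  refine ⟨c N U hUQ, ?_, ?_⟩
  · exact Set.mem_insert_of_mem _ (Set.mem_iUnion.2 ⟨ULift.up N, ⟨⟨U, hUQ⟩, rfl⟩⟩)
  · refine hAprop _ N le_rfl ?_
    rw [hc2 N U hUQ]; exact hUA

lemma dir32 [CompletelyRegularSpace X]
    (hcpt : ∀ S : Set (Opens X), IsOpen[α] S → CompactFamily S)
    {κ : Cardinal.{u}}
    (h : ∀ S : Set C(X, ℝ), (0 : C(X, ℝ)) ∈ @closure _ (generateFrom (subB α)) S →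
      ∃ T ⊆ S, Cardinal.mk T ≤ κ ∧
        (0 : C(X, ℝ)) ∈ @closure _ (generateFrom (subB α)) T) :
    ∀ P : Set (Opens X), (⊤ : Opens X) ∈ @closure _ α P →
      ∃ Q ⊆ P, Cardinal.mk Q ≤ κ ∧ (⊤ : Opens X) ∈ @closure _ α Q := by
  intro P hP
  have hPcov : IsAlphaCover α P := (cover_iff_closure α hcpt P).mpr hP
  set M : Set C(X, ℝ) := {f : C(X, ℝ) | ∃ U ∈ P, ∀ x ∉ (U : Set X), f x = 1} with hM
  have hMclos : (0 : C(X, ℝ)) ∈ @closure _ (generateFrom (subB α)) M := by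
    rw [mem_closure_generateFrom]
    intro F hFfin hFsub hF0
    obtain ⟨A, N, hAopen, hAtop, hAprop⟩ := helperF α hcpt hFfin hFsub hF0
    obtain ⟨U, hUP, hUA⟩ := hPcov A hAopen ⟨⊤, hAtop⟩
    obtain ⟨f, W, hWA, hf0, hf1⟩ := exists_fun α hcpt hAopen hUA
    refine ⟨f, ⟨U, hUP, hf1⟩, ?_⟩
    refine Set.mem_sInter.2 fun t ht => hAprop f N le_rfl ?_ t ht
    refine (hcpt A hAopen).1 hWA ?_
    intro x hx
    show f x ∈ (Iball N : Set ℝ)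
    rw [hf0 x hx]
    exact zero_mem_Iball N
  obtain ⟨T, hTM, hTcard, hTclos⟩ := h M hMclos
  have huex : ∀ f ∈ T, ∃ U, U ∈ P ∧ ∀ x ∉ (U : Set X), f x = 1 := by
    intro f hf
    obtain ⟨U, hU1, hU2⟩ := hTM hf
    exact ⟨U, hU1, hU2⟩
  choose u hu1 hu2 using huex
  set Q : Set (Opens X) := Set.range (fun p : T => u p.1 p.2) with hQ
  have hQP : Q ⊆ P := by rintro _ ⟨p, rfl⟩; exact hu1 _ _
  have hQcard : Cardinal.mk Q ≤ κ := le_trans Cardinal.mk_range_le hTcard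
  refine ⟨Q, hQP, hQcard, ?_⟩
  rw [← cover_iff_closure α hcpt]
  intro A hA hne
  have htop : ⊤ ∈ A := top_mem_of_nonempty α hcpt hA hne
  set V : Opens ℝ := ⟨Set.Iio 1, isOpen_Iio⟩ with hV
  have hso : IsOpen[generateFrom (subB α)] {f : C(X, ℝ) | preim f V ∈ A} :=
    isOpen_generateFrom_of_mem ⟨A, hA, V, rfl⟩
  have h0m : (0 : C(X, ℝ)) ∈ {f : C(X, ℝ) | preim f V ∈ A} := by
    show preim (0 : C(X, ℝ)) V ∈ A
    rw [preim_zero_of_mem (X := X) (show (0:ℝ) ∈ Set.Iio (1:ℝ) by norm_num)]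
    exact htop
  have hTclos' := (@mem_closure_iff C(X, ℝ) (generateFrom (subB α)) 0 T).1 hTclos
  obtain ⟨f, hfs, hfT⟩ := hTclos' _ hso h0m
  refine ⟨u f hfT, ⟨⟨f, hfT⟩, rfl⟩, ?_⟩
  refine (hcpt A hA).1 hfs ?_
  intro x hx
  by_contra hxU
  have h1 : f x = 1 := hu2 f hfT x hxU
  have h2 : f x < 1 := hx
  rw [h1] at h2; exact lt_irrefl _ h2

end Main

/-- For a completely regular `X` and a topology `α` on `C(X,$)` with `p(X) ⊆ α ⊆ κ(X)`
(all `α`-open sets are compact families and every `𝒪(x)` is `α`-open), the `α`-Lindelöf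
number of `X`, the tightness of `(C(X,$),α)` at `X`, and the tightness of `C_α(X,ℝ)` at
the zero function coincide. -/
theorem alphaLindelof_eq_tightness {X : Type u} [TopologicalSpace X]
    [CompletelyRegularSpace X]
    (α : TopologicalSpace (Opens X))
    (hcpt : ∀ S : Set (Opens X), IsOpen[α] S → CompactFamily S)
    (hp : ∀ x : X, IsOpen[α] {U : Opens X | x ∈ U}) :
    alphaLindelof α = tightnessAt α (⊤ : Opens X) ∧
      tightnessAt α (⊤ : Opens X) =
        tightnessAt
          (TopologicalSpace.generateFrom
            {S : Set C(X, ℝ) |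
              ∃ A : Set (Opens X), IsOpen[α] A ∧
                ∃ V : Opens ℝ, S = {f : C(X, ℝ) | preim f V ∈ A}})
          (0 : C(X, ℝ)) := by
  constructor
  · unfold alphaLindelof tightnessAt
    congr 1
    ext l
    constructor
    · rintro ⟨h1, h2⟩
      refine ⟨h1, fun S hS => ?_⟩
      obtain ⟨T, hT1, hT2, hT3⟩ := h2 S ((cover_iff_closure α hcpt S).mpr hS)
      exact ⟨T, hT1, hT2, (cover_iff_closure α hcpt T).mp hT3⟩
    · rintro ⟨h1, h2⟩
      refine ⟨h1, fun S hS => ?_⟩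
      obtain ⟨T, hT1, hT2, hT3⟩ := h2 S ((cover_iff_closure α hcpt S).mp hS)
      exact ⟨T, hT1, hT2, (cover_iff_closure α hcpt T).mpr hT3⟩
  · show tightnessAt α (⊤ : Opens X) = tightnessAt (generateFrom (subB α)) (0 : C(X, ℝ))
    unfold tightnessAt
    congr 1
    ext κ
    constructor
    · rintro ⟨h1, h2⟩
      exact ⟨h1, dir23 α hcpt h1 h2⟩
    · rintro ⟨h1, h2⟩
      exact ⟨h1, dir32 α hcpt h2⟩
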